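/- Under assumptions (A1)–(A4): if the initial value problem ẋ = f(t,x), x(0) = z has a (Carathéodory) solution x^z on [0, T], then there exist ε̄ ∈ (0,1] and a constant C such that for all 0 < ε ≤ ε̄, the perturbed initial value problem ẏ = f(t,y) + g(ε,t,y), y(0) = z_ε has a solution y^ε on [0, T], and sup_{0≤t≤T} |y^ε(t) − x^z(t)| ≤ C(|z_ε − z| + δ_ε), where δ_ε = ∫_0^T |g(ε, τ, x^z(τ))| dτ. -/

import Mathlib

open Set MeasureTheory intervalIntegral

section RadProj
variable {E : Type*} [NormedAddCommGroup E] [NormedSpace ℝ E]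

noncomputable def radProj (r : ℝ) (v : E) : E := if ‖v‖ ≤ r then v else (r / ‖v‖) • v

lemma radProj_eq_self {r : ℝ} {v : E} (h : ‖v‖ ≤ r) : radProj r v = v := if_pos h

lemma radProj_norm_le {r : ℝ} (hr : 0 ≤ r) (v : E) : ‖radProj r v‖ ≤ r := by
  unfold radProj
  split_ifs with h
  · exact h
  · push_neg at h
    have hv : (0:ℝ) < ‖v‖ := lt_of_le_of_lt hr h
    rw [norm_smul, Real.norm_eq_abs, abs_of_nonneg (by positivity),
      div_mul_cancel₀ _ (ne_of_gt hv)]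

private lemma radProj_lip_aux {r : ℝ} (hr : 0 ≤ r) (u v : E) (hvu : ‖v‖ ≤ ‖u‖) :
    ‖radProj r u - radProj r v‖ ≤ 2 * ‖u - v‖ := by
  unfold radProj
  have hnn : (0:ℝ) ≤ ‖u - v‖ := norm_nonneg _
  have huv : ‖u‖ - ‖v‖ ≤ ‖u - v‖ := norm_sub_norm_le u v
  split_ifs with h1 h2 h2
  · linarith
  · exact absurd (hvu.trans h1) h2
  · -- ‖v‖ ≤ r < ‖u‖
    push_neg at h1
    have hu0 : (0:ℝ) < ‖u‖ := lt_of_le_of_lt hr h1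
    have tri : ‖(r / ‖u‖) • u - v‖ ≤ ‖(r / ‖u‖) • u - u‖ + ‖u - v‖ :=
      norm_sub_le_norm_sub_add_norm_sub _ u v
    have h2' : ‖(r / ‖u‖) • u - u‖ = ‖u‖ - r := by
      have e : (r / ‖u‖) • u - u = (r / ‖u‖ - 1) • u := by rw [sub_smul, one_smul]
      rw [e, norm_smul, Real.norm_eq_abs,
        abs_of_nonpos (by rw [sub_nonpos, div_le_one hu0]; exact h1.le)]
      field_simp
      ring
    rw [h2'] at tri
    linarith
  · -- both > r
    push_neg at h1 h2
    have hu0 : (0:ℝ) < ‖u‖ := lt_of_le_of_lt hr h1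
    have hv0 : (0:ℝ) < ‖v‖ := lt_of_le_of_lt hr h2
    have tri : ‖(r / ‖u‖) • u - (r / ‖v‖) • v‖
        ≤ ‖(r / ‖u‖) • u - (r / ‖u‖) • v‖ + ‖(r / ‖u‖) • v - (r / ‖v‖) • v‖ :=
      norm_sub_le_norm_sub_add_norm_sub _ _ _
    have e1 : ‖(r / ‖u‖) • u - (r / ‖u‖) • v‖ = (r / ‖u‖) * ‖u - v‖ := by
      rw [← smul_sub, norm_smul, Real.norm_eq_abs, abs_of_nonneg (by positivity)]
    have e2 : ‖(r / ‖u‖) • v - (r / ‖v‖) • v‖ = (r / ‖v‖ - r / ‖u‖) * ‖v‖ := by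
      rw [← sub_smul, norm_smul, Real.norm_eq_abs, abs_of_nonpos, neg_sub]
      rw [sub_nonpos]
      exact div_le_div_of_nonneg_left hr hv0 hvu
    have b1 : (r / ‖u‖) * ‖u - v‖ ≤ ‖u - v‖ := by
      have : r / ‖u‖ ≤ 1 := by rw [div_le_one hu0]; exact h1.le
      nlinarith
    have b2 : (r / ‖v‖ - r / ‖u‖) * ‖v‖ ≤ ‖u - v‖ := by
      have e : (r / ‖v‖ - r / ‖u‖) * ‖v‖ = r * (‖u‖ - ‖v‖) / ‖u‖ := by field_simp
      rw [e]
      have h3 : r * (‖u‖ - ‖v‖) ≤ ‖u‖ * (‖u‖ - ‖v‖) := by nlinarith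
      calc r * (‖u‖ - ‖v‖) / ‖u‖ ≤ ‖u‖ * (‖u‖ - ‖v‖) / ‖u‖ := by
            gcongr
        _ = ‖u‖ - ‖v‖ := by field_simp
        _ ≤ ‖u - v‖ := huv
    linarith

lemma radProj_lip {r : ℝ} (hr : 0 ≤ r) (u v : E) :
    ‖radProj r u - radProj r v‖ ≤ 2 * ‖u - v‖ := by
  rcases le_total ‖v‖ ‖u‖ with h | h
  · exact radProj_lip_aux hr u v h
  · rw [norm_sub_rev, norm_sub_rev u v]; exact radProj_lip_aux hr v u h

lemma radProj_continuous {r : ℝ} (hr : 0 ≤ r) : Continuous (radProj r : E → E) := by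
  refine LipschitzWith.continuous (K := 2) (LipschitzWith.of_dist_le_mul fun u v => ?_)
  rw [dist_eq_norm, dist_eq_norm]
  simpa using radProj_lip hr u v

end RadProj

/-- A (Carathéodory) solution of `ẏ = φ(t, y)`, `y(0) = y₀`, on `[0, T]`:
an (absolutely) continuous function satisfying the corresponding integral equation. -/
def IsCaraSol (K : ℕ) (T : ℝ)
    (φ : ℝ → EuclideanSpace ℝ (Fin K) → EuclideanSpace ℝ (Fin K))
    (y₀ : EuclideanSpace ℝ (Fin K)) (y : ℝ → EuclideanSpace ℝ (Fin K)) : Prop :=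
  ContinuousOn y (Set.Icc 0 T) ∧ y 0 = y₀ ∧
  IntervalIntegrable (fun τ => φ τ (y τ)) MeasureTheory.volume 0 T ∧
  ∀ t ∈ Set.Icc 0 T, y t = y₀ + ∫ τ in (0:ℝ)..t, φ τ (y τ)

/-- Under (A1)–(A4), if `ẋ = f(t,x), x(0) = z` has a solution `x` on
`[0,T]`, then there are `ε̄ ∈ (0,1]` and a constant `C` such that for all `0 < ε ≤ ε̄`
the perturbed problem `ẏ = f(t,y) + g(ε,t,y), y(0) = z_ε` has a solution `y^ε` on
`[0,T]` with `sup_{[0,T]} ‖y^ε − x‖ ≤ C (‖z_ε − z‖ + δ_ε)`,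
where `δ_ε = ∫_0^T ‖g(ε,τ,x(τ))‖ dτ`. -/
theorem perturbed_ode_existence_and_error_bound
    (K : ℕ) (hK : 1 ≤ K) (T : ℝ) (hT : 0 < T)
    (f : ℝ → EuclideanSpace ℝ (Fin K) → EuclideanSpace ℝ (Fin K))
    (g : ℝ → ℝ → EuclideanSpace ℝ (Fin K) → EuclideanSpace ℝ (Fin K))
    (z : EuclideanSpace ℝ (Fin K)) (zε : ℝ → EuclideanSpace ℝ (Fin K))
    -- (A1)
    (hA1 : ∃ C1 : ℝ, ∀ ε ∈ Set.Ioc (0:ℝ) 1, ∀ t ∈ Set.Icc (0:ℝ) T,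
      ‖f t 0‖ + ‖g ε t 0‖ ≤ C1)
    -- (A2)
    (hA2 : (∀ x, Measurable fun t => f t x) ∧
      (∀ ε ∈ Set.Ioc (0:ℝ) 1, ∀ x, Measurable fun t => f t x + g ε t x))
    -- (A3)
    (hA3 : ∀ r > (0:ℝ), ∃ L : ℝ,
      (∀ t ∈ Set.Icc (0:ℝ) T, ∀ x ∈ Metric.ball (0 : EuclideanSpace ℝ (Fin K)) r,
        ∀ y ∈ Metric.ball (0 : EuclideanSpace ℝ (Fin K)) r,
          ‖f t x - f t y‖ ≤ L * ‖x - y‖) ∧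
      (∀ ε ∈ Set.Ioc (0:ℝ) 1, ∀ t ∈ Set.Icc (0:ℝ) T,
        ∀ x ∈ Metric.ball (0 : EuclideanSpace ℝ (Fin K)) r,
        ∀ y ∈ Metric.ball (0 : EuclideanSpace ℝ (Fin K)) r,
          ‖(f t x + g ε t x) - (f t y + g ε t y)‖ ≤ L * ‖x - y‖))
    -- (A4)
    (hA4 : (∀ δ > (0:ℝ), ∃ ε₀ > (0:ℝ), ∀ ε ∈ Set.Ioc (0:ℝ) 1, ε ≤ ε₀ →
        ‖zε ε - z‖ ≤ δ) ∧
      (∀ r > (0:ℝ), ∀ δ > (0:ℝ), ∃ ε₀ > (0:ℝ), ∀ ε ∈ Set.Ioc (0:ℝ) 1, ε ≤ ε₀ →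
        ∀ t ∈ Set.Icc (0:ℝ) T, ∀ y ∈ Metric.ball (0 : EuclideanSpace ℝ (Fin K)) r,
          ‖g ε t y‖ ≤ δ))
    (x : ℝ → EuclideanSpace ℝ (Fin K))
    (hx : IsCaraSol K T f z x) :
    ∃ εbar ∈ Set.Ioc (0:ℝ) 1, ∃ C : ℝ,
      ∀ ε ∈ Set.Ioc (0:ℝ) 1, ε ≤ εbar →
        ∃ y : ℝ → EuclideanSpace ℝ (Fin K),
          IsCaraSol K T (fun t v => f t v + g ε t v) (zε ε) y ∧
          ∀ t ∈ Set.Icc (0:ℝ) T,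
            ‖y t - x t‖ ≤ C * (‖zε ε - z‖ + ∫ τ in (0:ℝ)..T, ‖g ε τ (x τ)‖) := by
  obtain ⟨hxc, hx0, hxi, hxeq⟩ := hx
  obtain ⟨C1, hC1⟩ := hA1
  -- bound on the reference solution
  obtain ⟨M0, hM0⟩ := (isCompact_Icc : IsCompact (Icc (0:ℝ) T)).exists_bound_of_continuousOn hxc
  set M := max M0 0 with hMdef
  have hMnn : (0:ℝ) ≤ M := le_max_right _ _
  have hM : ∀ t ∈ Icc (0:ℝ) T, ‖x t‖ ≤ M := fun t ht => (hM0 t ht).trans (le_max_left _ _)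
  have hrpos : (0:ℝ) < M + 2 := by linarith
  obtain ⟨L0, hL0f, hL0⟩ := hA3 (M + 2) hrpos
  set L := max L0 0 with hLdef
  have hLnn : (0:ℝ) ≤ L := le_max_right _ _
  set B := L * (M + 1) + max C1 0 with hBdef
  have hBnn : (0:ℝ) ≤ B := by positivity
  -- the clamp function
  set c : ℝ → ℝ := fun t => max (min t T) 0 with hcdef
  have hccont : Continuous c := ((continuous_id.min continuous_const).max continuous_const)
  have hcmem : ∀ t, c t ∈ Icc (0:ℝ) T :=
    fun t => ⟨le_max_right _ _, max_le (min_le_right t T) hT.le⟩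
  have hceq : ∀ t ∈ Icc (0:ℝ) T, c t = t := fun t ht => by
    simp only [hcdef]; rw [min_eq_left ht.2, max_eq_left ht.1]
  have hclip : LipschitzWith 1 c := (LipschitzWith.id.min_const T).max_const 0
  -- pick the number of iterations
  obtain ⟨n, hn⟩ : ∃ n : ℕ, (2 * L * T) ^ n / n.factorial ≤ 1 / 2 := by
    have := (FloorSemiring.tendsto_pow_div_factorial_atTop (K := ℝ) (2 * L * T)).eventually
      (eventually_le_nhds (by norm_num : (0:ℝ) < 1/2))
    exact this.exists
  set C := 2 * Real.exp (2 * L * T) with hCdef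
  have hCpos : (0:ℝ) < C := by positivity
  obtain ⟨ε₁, hε₁pos, hε₁⟩ := hA4.1 (1 / (2 * C)) (by positivity)
  obtain ⟨ε₂, hε₂pos, hε₂⟩ := hA4.2 (M + 2) hrpos (1 / (2 * C * T)) (by positivity)
  refine ⟨min 1 (min ε₁ ε₂), ⟨by positivity, min_le_left _ _⟩, C, ?_⟩
  intro ε hε hεle
  have hεle₁ : ε ≤ ε₁ := hεle.trans ((min_le_right _ _).trans (min_le_left _ _))
  have hεle₂ : ε ≤ ε₂ := hεle.trans ((min_le_right _ _).trans (min_le_right _ _))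
  -- the truncated right-hand side
  obtain ⟨φt, hφtdef⟩ : ∃ φt' : ℝ → EuclideanSpace ℝ (Fin K) → EuclideanSpace ℝ (Fin K),
      φt' = fun t v => if t ∈ Icc (0:ℝ) T then
        f t (radProj (M + 1) v) + g ε t (radProj (M + 1) v) else 0 := ⟨_, rfl⟩
  have hrpmem : ∀ v : EuclideanSpace ℝ (Fin K),
      radProj (M + 1) v ∈ Metric.ball (0 : EuclideanSpace ℝ (Fin K)) (M + 2) := by
    intro v
    rw [Metric.mem_ball, dist_zero_right]
    have := radProj_norm_le (by linarith : (0:ℝ) ≤ M + 1) v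
    linarith
  have hφlip : ∀ (t : ℝ) (u v : EuclideanSpace ℝ (Fin K)),
      ‖φt t u - φt t v‖ ≤ 2 * L * ‖u - v‖ := by
    intro t u v
    simp only [hφtdef]
    split_ifs with ht
    · have h1 := hL0 ε hε t ht _ (hrpmem u) _ (hrpmem v)
      have h2 := radProj_lip (by linarith : (0:ℝ) ≤ M + 1) u v
      have h3 : L0 * ‖radProj (M+1) u - radProj (M+1) v‖ ≤ L * ‖radProj (M+1) u - radProj (M+1) v‖ :=
        mul_le_mul_of_nonneg_right (le_max_left _ _) (norm_nonneg _)
      have h4 : L * ‖radProj (M+1) u - radProj (M+1) v‖ ≤ L * (2 * ‖u - v‖) :=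
        mul_le_mul_of_nonneg_left h2 hLnn
      calc ‖_ - _‖ ≤ L0 * ‖radProj (M+1) u - radProj (M+1) v‖ := h1
        _ ≤ L * (2 * ‖u - v‖) := h3.trans h4
        _ = 2 * L * ‖u - v‖ := by ring
    · simp; positivity
  have hφbd : ∀ (t : ℝ) (v : EuclideanSpace ℝ (Fin K)), ‖φt t v‖ ≤ B := by
    intro t v
    simp only [hφtdef]
    split_ifs with ht
    · have h1 := hL0 ε hε t ht _ (hrpmem v) 0 (Metric.mem_ball_self hrpos)
      have h2 : ‖radProj (M+1) v - 0‖ ≤ M + 1 := by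
        rw [sub_zero]; exact radProj_norm_le (by linarith) v
      have h3 : ‖f t 0 + g ε t 0‖ ≤ max C1 0 := by
        calc ‖f t 0 + g ε t 0‖ ≤ ‖f t 0‖ + ‖g ε t 0‖ := norm_add_le _ _
          _ ≤ C1 := hC1 ε hε t ht
          _ ≤ max C1 0 := le_max_left _ _
      have h4 : L0 * ‖radProj (M+1) v - 0‖ ≤ L * (M + 1) := by
        calc L0 * ‖radProj (M+1) v - 0‖ ≤ L * ‖radProj (M+1) v - 0‖ :=
              mul_le_mul_of_nonneg_right (le_max_left _ _) (norm_nonneg _)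
          _ ≤ L * (M + 1) := mul_le_mul_of_nonneg_left h2 hLnn
      calc ‖f t (radProj (M+1) v) + g ε t (radProj (M+1) v)‖
          ≤ ‖(f t (radProj (M+1) v) + g ε t (radProj (M+1) v)) - (f t 0 + g ε t 0)‖
            + ‖f t 0 + g ε t 0‖ := by
              have := norm_add_le ((f t (radProj (M+1) v) + g ε t (radProj (M+1) v)) - (f t 0 + g ε t 0)) (f t 0 + g ε t 0)
              simpa using this
        _ ≤ L * (M + 1) + max C1 0 := add_le_add (h1.trans h4) h3
        _ = B := hBdef.symm
    · simp [hBnn]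
  -- measurability
  have hφmeas : ∀ v, StronglyMeasurable fun t => φt t v := by
    intro v
    refine Measurable.stronglyMeasurable ?_
    simp only [hφtdef]
    exact Measurable.ite measurableSet_Icc (hA2.2 ε hε _) measurable_const
  have hφcontv : ∀ t, Continuous fun v => φt t v := by
    intro t
    refine LipschitzWith.continuous (K := (2*L).toNNReal) (LipschitzWith.of_dist_le_mul fun u v => ?_)
    rw [dist_eq_norm, dist_eq_norm, Real.coe_toNNReal _ (by positivity)]
    exact hφlip t u v
  have hφunc : StronglyMeasurable
      (Function.uncurry fun (v : EuclideanSpace ℝ (Fin K)) (t : ℝ) => φt t v) :=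
    stronglyMeasurable_uncurry_of_continuous_of_stronglyMeasurable hφcontv hφmeas
  have hcompSM : ∀ w : ℝ → EuclideanSpace ℝ (Fin K), Measurable w →
      StronglyMeasurable fun τ => φt τ (w τ) := by
    intro w hw
    have : (fun τ => φt τ (w τ)) =
        (Function.uncurry fun (v : EuclideanSpace ℝ (Fin K)) (t : ℝ) => φt t v) ∘
          (fun τ => (w τ, τ)) := rfl
    rw [this]
    exact hφunc.comp_measurable (hw.prodMk measurable_id)
  have hInt : ∀ w : ℝ → EuclideanSpace ℝ (Fin K), Measurable w → ∀ a b : ℝ,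
      IntervalIntegrable (fun τ => φt τ (w τ)) volume a b := by
    intro w hw a b
    refine (_root_.intervalIntegrable_const (c := B)).mono_fun
      ((hcompSM w hw).aestronglyMeasurable) (ae_of_all _ fun τ => ?_)
    rw [Real.norm_eq_abs, abs_of_nonneg hBnn]
    exact hφbd τ (w τ)
  -- the Picard operator
  have hΦcont : ∀ u : BoundedContinuousFunction ℝ (EuclideanSpace ℝ (Fin K)),
      Continuous fun t => zε ε + ∫ τ in (0:ℝ)..(c t), φt τ (u τ) := by
    intro u
    refine continuous_const.add (LipschitzWith.continuous (K := B.toNNReal)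
      (LipschitzWith.of_dist_le_mul fun t s => ?_))
    rw [dist_eq_norm, Real.coe_toNNReal _ hBnn,
      integral_interval_sub_left (hInt u u.continuous.measurable 0 (c t))
        (hInt u u.continuous.measurable 0 (c s))]
    calc ‖∫ τ in (c s)..(c t), φt τ (u τ)‖ ≤ B * |c t - c s| :=
          intervalIntegral.norm_integral_le_of_norm_le_const fun τ _ => hφbd τ (u τ)
      _ ≤ B * dist t s := by
          have := hclip.dist_le_mul t s
          rw [Real.dist_eq] at this ⊢
          exact mul_le_mul_of_nonneg_left (by simpa [Real.dist_eq] using this) hBnn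
  have hΦbd : ∀ (u : BoundedContinuousFunction ℝ (EuclideanSpace ℝ (Fin K))) (t : ℝ),
      ‖zε ε + ∫ τ in (0:ℝ)..(c t), φt τ (u τ)‖ ≤ ‖zε ε‖ + B * T := by
    intro u t
    refine (norm_add_le _ _).trans (add_le_add_right ?_ _)
    calc ‖∫ τ in (0:ℝ)..(c t), φt τ (u τ)‖ ≤ B * |c t - 0| :=
          intervalIntegral.norm_integral_le_of_norm_le_const fun τ _ => hφbd τ (u τ)
      _ ≤ B * T := by
          rw [sub_zero, abs_of_nonneg (hcmem t).1]
          exact mul_le_mul_of_nonneg_left (hcmem t).2 hBnn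
  obtain ⟨Φ, hΦcoe⟩ : ∃ Φ' : (BoundedContinuousFunction ℝ (EuclideanSpace ℝ (Fin K))) →
      (BoundedContinuousFunction ℝ (EuclideanSpace ℝ (Fin K))),
      ∀ u t, Φ' u t = zε ε + ∫ τ in (0:ℝ)..(c t), φt τ (u τ) :=
    ⟨fun u => BoundedContinuousFunction.ofNormedAddCommGroup _ (hΦcont u)
      (‖zε ε‖ + B * T) (hΦbd u), fun u t => rfl⟩
  -- iterated contraction estimate
  have hIT : ∀ (m : ℕ) (u v : BoundedContinuousFunction ℝ (EuclideanSpace ℝ (Fin K))) (t : ℝ),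
      ‖Φ^[m] u t - Φ^[m] v t‖ ≤ (2 * L * c t) ^ m / m.factorial * dist u v := by
    intro m
    induction m with
    | zero =>
      intro u v t
      simpa using (dist_eq_norm (u t) (v t)) ▸
        BoundedContinuousFunction.dist_coe_le_dist (f := u) (g := v) t
    | succ m ih =>
      intro u v t
      rw [Function.iterate_succ_apply', Function.iterate_succ_apply']
      have hm1 := hInt _ (Φ^[m] u).continuous.measurable 0 (c t)
      have hm2 := hInt _ (Φ^[m] v).continuous.measurable 0 (c t)
      have heq : Φ (Φ^[m] u) t - Φ (Φ^[m] v) t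
          = ∫ τ in (0:ℝ)..(c t), (φt τ (Φ^[m] u τ) - φt τ (Φ^[m] v τ)) := by
        rw [hΦcoe, hΦcoe, intervalIntegral.integral_sub hm1 hm2]
        abel
      rw [heq]
      have hct0 : (0:ℝ) ≤ c t := (hcmem t).1
      calc ‖∫ τ in (0:ℝ)..(c t), (φt τ (Φ^[m] u τ) - φt τ (Φ^[m] v τ))‖
          ≤ ∫ τ in (0:ℝ)..(c t), ‖φt τ (Φ^[m] u τ) - φt τ (Φ^[m] v τ)‖ :=
            intervalIntegral.norm_integral_le_integral_norm hct0
        _ ≤ ∫ τ in (0:ℝ)..(c t),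
              ((2*L)^(m+1) / m.factorial * dist u v) * τ ^ m := by
            refine intervalIntegral.integral_mono_on hct0 ((hm1.sub hm2).norm) ?_ ?_
            · exact (continuous_const.mul (continuous_pow m)).intervalIntegrable _ _
            · intro τ hτ
              have hτT : τ ∈ Icc (0:ℝ) T := ⟨hτ.1, hτ.2.trans (hcmem t).2⟩
              have hcτ : c τ = τ := hceq τ hτT
              have h1 := hφlip τ (Φ^[m] u τ) (Φ^[m] v τ)
              have h2 := ih u v τ
              rw [hcτ] at h2
              calc ‖φt τ (Φ^[m] u τ) - φt τ (Φ^[m] v τ)‖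
                  ≤ 2 * L * ‖Φ^[m] u τ - Φ^[m] v τ‖ := h1
                _ ≤ 2 * L * ((2 * L * τ) ^ m / m.factorial * dist u v) :=
                    mul_le_mul_of_nonneg_left h2 (by positivity)
                _ = ((2*L)^(m+1) / m.factorial * dist u v) * τ ^ m := by
                    rw [mul_pow]; ring
        _ = ((2*L)^(m+1) / m.factorial * dist u v) * ((c t) ^ (m+1) / (m+1)) := by
            rw [intervalIntegral.integral_const_mul, integral_pow]
            norm_num
        _ = (2 * L * c t) ^ (m+1) / (m+1).factorial * dist u v := by
            rw [Nat.factorial_succ, mul_pow]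
            have h1 : ((m.factorial : ℝ)) ≠ 0 := Nat.cast_ne_zero.mpr m.factorial_ne_zero
            have h2 : ((m:ℝ) + 1) ≠ 0 := by positivity
            push_cast
            field_simp
            ring
  -- contraction of the n-th iterate
  have hq : ∀ u v : BoundedContinuousFunction ℝ (EuclideanSpace ℝ (Fin K)),
      dist (Φ^[n] u) (Φ^[n] v) ≤ 1/2 * dist u v := by
    intro u v
    refine (BoundedContinuousFunction.dist_le (by positivity)).mpr fun t => ?_
    rw [dist_eq_norm]
    have h1 : (2*L*c t)^n ≤ (2*L*T)^n := by
      apply pow_le_pow_left₀ (by positivity)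
      exact mul_le_mul_of_nonneg_left (hcmem t).2 (by positivity)
    calc ‖Φ^[n] u t - Φ^[n] v t‖ ≤ (2*L*c t)^n / n.factorial * dist u v := hIT n u v t
      _ ≤ (2*L*T)^n / n.factorial * dist u v := by gcongr
      _ ≤ 1/2 * dist u v := mul_le_mul_of_nonneg_right hn dist_nonneg
  have hcontr : ContractingWith (1/2 : NNReal) (Φ^[n]) := by
    refine ⟨by rw [← NNReal.coe_lt_coe]; norm_num, LipschitzWith.of_dist_le_mul fun u v => ?_⟩
    refine (hq u v).trans_eq ?_
    norm_num
  -- the clamped reference solution as a bounded continuous function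
  have hxhatcont : Continuous fun t => x (c t) := hxc.comp_continuous hccont hcmem
  obtain ⟨xhat, hxhatcoe⟩ : ∃ xh : BoundedContinuousFunction ℝ (EuclideanSpace ℝ (Fin K)),
      ∀ t, xh t = x (c t) :=
    ⟨BoundedContinuousFunction.ofNormedAddCommGroup _ hxhatcont M (fun t => hM _ (hcmem t)),
      fun t => rfl⟩
  set ystar := ContractingWith.fixedPoint (Φ^[n]) hcontr with hystardef
  have hyfix : Φ ystar = ystar := hcontr.isFixedPt_fixedPoint_iterate
  set δ := ∫ τ in (0:ℝ)..T, ‖g ε τ (x τ)‖ with hδdef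
  have hδnn : 0 ≤ δ := intervalIntegral.integral_nonneg hT.le fun τ _ => norm_nonneg _
  -- the integrand identification on [0, T]
  have hgcongr : ∀ τ ∈ Icc (0:ℝ) T, φt τ (x (c τ)) - f τ (x τ) = g ε τ (x τ) := by
    intro τ hτ
    rw [hceq τ hτ]
    simp only [hφtdef, if_pos hτ, radProj_eq_self ((hM τ hτ).trans (by linarith : M ≤ M+1))]
    exact add_sub_cancel_left _ _
  have hrep : IntervalIntegrable (fun τ => φt τ (x (c τ)) - f τ (x τ)) volume 0 T :=
    (hInt _ hxhatcont.measurable 0 T).sub hxi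
  have hδeq : δ = ∫ τ in (0:ℝ)..T, ‖φt τ (x (c τ)) - f τ (x τ)‖ := by
    rw [hδdef]
    refine (intervalIntegral.integral_congr fun τ hτ => ?_).symm
    rw [uIcc_of_le hT.le] at hτ
    simp only [hgcongr τ hτ]
  -- distance from xhat to its image
  have hD0 : dist xhat (Φ xhat) ≤ ‖zε ε - z‖ + δ := by
    refine (BoundedContinuousFunction.dist_le (by positivity)).mpr fun t => ?_
    have hct := hcmem t
    have hIφ := hInt _ hxhatcont.measurable 0 (c t)
    have hIf : IntervalIntegrable (fun τ => f τ (x τ)) volume 0 (c t) :=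
      hxi.mono_set (uIcc_subset_uIcc (by rw [uIcc_of_le hT.le]; exact ⟨le_rfl, hT.le⟩)
        (by rw [uIcc_of_le hT.le]; exact hct))
    have hIφ' : IntervalIntegrable (fun τ => φt τ (x (c τ))) volume 0 (c t) :=
      hInt _ hxhatcont.measurable 0 (c t)
    have heq2 : Φ xhat t - xhat t
        = (zε ε - z) + ∫ τ in (0:ℝ)..(c t), (φt τ (x (c τ)) - f τ (x τ)) := by
      rw [hΦcoe, hxhatcoe, hxeq (c t) hct, intervalIntegral.integral_sub hIφ' hIf]
      simp only [hxhatcoe]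
      abel
    rw [dist_eq_norm, ← norm_neg, neg_sub, heq2]
    calc ‖(zε ε - z) + ∫ τ in (0:ℝ)..(c t), (φt τ (x (c τ)) - f τ (x τ))‖
        ≤ ‖zε ε - z‖ + ‖∫ τ in (0:ℝ)..(c t), (φt τ (x (c τ)) - f τ (x τ))‖ := norm_add_le _ _
      _ ≤ ‖zε ε - z‖ + δ := by
          refine add_le_add_right ?_ _
          rw [hδeq]
          calc ‖∫ τ in (0:ℝ)..(c t), (φt τ (x (c τ)) - f τ (x τ))‖
              ≤ ∫ τ in (0:ℝ)..(c t), ‖φt τ (x (c τ)) - f τ (x τ)‖ :=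
                intervalIntegral.norm_integral_le_integral_norm hct.1
            _ ≤ ∫ τ in (0:ℝ)..T, ‖φt τ (x (c τ)) - f τ (x τ)‖ :=
                intervalIntegral.integral_mono_interval le_rfl hct.1 hct.2
                  (ae_of_all _ fun τ => norm_nonneg _) hrep.norm
  -- distance from xhat to the n-th image
  have hsum : dist xhat (Φ^[n] xhat) ≤ Real.exp (2*L*T) * dist xhat (Φ xhat) := by
    have h1 : dist xhat (Φ^[n] xhat) ≤
        ∑ k ∈ Finset.range n, dist (Φ^[k] xhat) (Φ^[k+1] xhat) := by
      simpa using dist_le_range_sum_dist (fun k => Φ^[k] xhat) n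
    have h2 : ∀ k, dist (Φ^[k] xhat) (Φ^[k+1] xhat)
        ≤ (2*L*T)^k / k.factorial * dist xhat (Φ xhat) := by
      intro k
      rw [Function.iterate_succ_apply]
      refine (BoundedContinuousFunction.dist_le (by positivity)).mpr fun t => ?_
      rw [dist_eq_norm]
      refine (hIT k _ _ t).trans ?_
      have h1' : (2*L*c t)^k ≤ (2*L*T)^k := by
        apply pow_le_pow_left₀ (by positivity)
        exact mul_le_mul_of_nonneg_left (hcmem t).2 (by positivity)
      gcongr
    calc dist xhat (Φ^[n] xhat)
        ≤ ∑ k ∈ Finset.range n, dist (Φ^[k] xhat) (Φ^[k+1] xhat) := h1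
      _ ≤ ∑ k ∈ Finset.range n, (2*L*T)^k / k.factorial * dist xhat (Φ xhat) :=
          Finset.sum_le_sum fun k _ => h2 k
      _ = (∑ k ∈ Finset.range n, (2*L*T)^k / k.factorial) * dist xhat (Φ xhat) :=
          (Finset.sum_mul _ _ _).symm
      _ ≤ Real.exp (2*L*T) * dist xhat (Φ xhat) :=
          mul_le_mul_of_nonneg_right (Real.sum_le_exp_of_nonneg (by positivity) n) dist_nonneg
  -- total distance estimate
  have hdy : dist xhat ystar ≤ C * (‖zε ε - z‖ + δ) := by
    have h0 := hcontr.dist_fixedPoint_le xhat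
    rw [← hystardef] at h0
    have hhalf : (1 - ((1/2 : NNReal) : ℝ)) = 1/2 := by norm_num
    rw [hhalf] at h0
    calc dist xhat ystar ≤ dist xhat (Φ^[n] xhat) / (1/2) := h0
      _ = 2 * dist xhat (Φ^[n] xhat) := by ring
      _ ≤ 2 * (Real.exp (2*L*T) * dist xhat (Φ xhat)) := by linarith
      _ ≤ 2 * (Real.exp (2*L*T) * (‖zε ε - z‖ + δ)) := by
          have h5 := mul_le_mul_of_nonneg_left hD0 (Real.exp_nonneg (2*L*T))
          linarith
      _ = C * (‖zε ε - z‖ + δ) := by rw [hCdef]; ring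
  -- smallness of the perturbation
  have hz1 : ‖zε ε - z‖ ≤ 1/(2*C) := hε₁ ε hε hεle₁
  have hδ2 : δ ≤ 1/(2*C) := by
    rw [hδeq]
    have hball : ∀ τ ∈ Icc (0:ℝ) T,
        x τ ∈ Metric.ball (0 : EuclideanSpace ℝ (Fin K)) (M+2) := by
      intro τ hτ; rw [Metric.mem_ball, dist_zero_right]; linarith [hM τ hτ]
    calc (∫ τ in (0:ℝ)..T, ‖φt τ (x (c τ)) - f τ (x τ)‖)
        ≤ ∫ _τ in (0:ℝ)..T, (1/(2*C*T)) := by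
          refine intervalIntegral.integral_mono_on hT.le hrep.norm
            (_root_.intervalIntegrable_const) fun τ hτ => ?_
          rw [hgcongr τ hτ]
          exact hε₂ ε hε hεle₂ τ hτ _ (hball τ hτ)
      _ = 1/(2*C) := by
          rw [intervalIntegral.integral_const, smul_eq_mul, sub_zero]
          field_simp
  have hCDle : C * (‖zε ε - z‖ + δ) ≤ 1 := by
    have h2 : 1/(2*C) + 1/(2*C) = 1/C := by
      field_simp
      norm_num
    have h1 : ‖zε ε - z‖ + δ ≤ 1/C := by linarith
    calc C * (‖zε ε - z‖ + δ) ≤ C * (1/C) := mul_le_mul_of_nonneg_left h1 hCpos.le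
      _ = 1 := mul_one_div_cancel hCpos.ne'
  -- the fixed point stays in the ball
  have hbnd : ∀ t, ‖ystar t - xhat t‖ ≤ C * (‖zε ε - z‖ + δ) := by
    intro t
    rw [← dist_eq_norm, dist_comm]
    exact (BoundedContinuousFunction.dist_coe_le_dist t).trans hdy
  have hyb : ∀ t, ‖ystar t‖ ≤ M + 1 := by
    intro t
    have h2 : ‖xhat t‖ ≤ M := by rw [hxhatcoe]; exact hM _ (hcmem t)
    calc ‖ystar t‖ ≤ ‖xhat t‖ + ‖ystar t - xhat t‖ := by
          have := norm_add_le (xhat t) (ystar t - xhat t); simpa using this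
      _ ≤ M + 1 := add_le_add h2 ((hbnd t).trans hCDle)
  have hkey : ∀ τ ∈ Icc (0:ℝ) T, φt τ (ystar τ) = f τ (ystar τ) + g ε τ (ystar τ) := by
    intro τ hτ
    simp only [hφtdef, if_pos hτ, radProj_eq_self (hyb τ)]
  have hfix : ∀ t, ystar t = zε ε + ∫ τ in (0:ℝ)..(c t), φt τ (ystar τ) := by
    intro t
    conv_lhs => rw [← hyfix]
    exact hΦcoe ystar t
  refine ⟨⇑ystar, ⟨ystar.continuous.continuousOn, ?_, ?_, ?_⟩, ?_⟩
  · rw [hfix 0, hceq 0 (by constructor <;> simp [hT.le]), intervalIntegral.integral_same, add_zero]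
  · have h := hInt _ ystar.continuous.measurable 0 T
    rw [intervalIntegrable_iff_integrableOn_Ioc_of_le hT.le] at h ⊢
    exact h.congr_fun (fun τ hτ => hkey τ (Ioc_subset_Icc_self hτ)) measurableSet_Ioc
  · intro t ht
    rw [hfix t, hceq t ht]
    congr 1
    refine intervalIntegral.integral_congr fun τ hτ => ?_
    rw [uIcc_of_le ht.1] at hτ
    exact hkey τ ⟨hτ.1, hτ.2.trans ht.2⟩
  · intro t ht
    have h1 := hbnd t
    rw [hxhatcoe, hceq t ht] at h1
    exact h1
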